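/- Let Q be a (conservative) rate matrix, B : Set ι, and x0 ∈ B. Then for every real t ≥ 0, ∑ y ∈ B, (Matrix.exp ℝ (t • Q_B)) x0 y + ∫ s in (0)..(t), (∑ y ∈ B, ∑ z ∈ Bᶜ, (Matrix.exp ℝ (s • Q_B)) x0 y * Q y z) ds = 1. (Conservation/exit-flux identity underlying Theorem 1.1(ii)–(iii) of the paper: the probability of still being inside B plus the cumulative probability flux out of B equals one.) -/

import Mathlib

set_option maxHeartbeats 1000000

/-- Mathlib's exponential, specialized to real matrices (`Matrix.exp ℝ`). -/
noncomputable def Matrix.exp (𝕂 : Type*) [Field 𝕂] {ι : Type*} [Fintype ι] [DecidableEq ι]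
    [Algebra 𝕂 ℝ] (A : Matrix ι ι ℝ) : Matrix ι ι ℝ :=
  NormedSpace.exp A

open Classical in
/-- The truncation `Q_A` of `Q` to `A`: every state outside `A` is made absorbing. -/
noncomputable def Matrix.truncation {ι : Type*} (Q : Matrix ι ι ℝ) (A : Set ι) :
    Matrix ι ι ℝ :=
  Matrix.of fun x y => if x ∈ A then Q x y else 0

attribute [local instance] Matrix.linftyOpNormedRing Matrix.linftyOpNormedAlgebra

lemma entry_hasDerivAt {ι : Type*} [Fintype ι] [DecidableEq ι] (T : Matrix ι ι ℝ)
    (x y : ι) (t : ℝ) :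
    HasDerivAt (fun s : ℝ => Matrix.exp ℝ (s • T) x y)
      ((Matrix.exp ℝ (t • T) * T) x y) t := by
  have h : HasDerivAt (fun s : ℝ => NormedSpace.exp (s • T))
      (NormedSpace.exp (t • T) * T) t := hasDerivAt_exp_smul_const (𝕂 := ℝ) T t
  let L : Matrix ι ι ℝ →L[ℝ] ℝ :=
    LinearMap.toContinuousLinearMap
      ((LinearMap.proj y).comp ((LinearMap.proj x : (ι → ι → ℝ) →ₗ[ℝ] (ι → ℝ))))
  exact L.hasFDerivAt.comp_hasDerivAt t h

/-- Conservation/exit-flux identity: for a conservative rate matrix `Q`, a truncation `B`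
and an initial state `x0 ∈ B`, the probability of still being inside `B` at time `t` plus
the cumulative probability flux out of `B` up to time `t` equals one. -/
theorem matrix_exit_flux_identity {ι : Type*} [Fintype ι] [DecidableEq ι] [Nonempty ι]
    (Q : Matrix ι ι ℝ) (hMetzler : ∀ x y, x ≠ y → Q x y ≥ 0)
    (hrow : ∀ x, ∑ y, Q x y = 0) (B : Set ι) (x0 : ι) (hx0 : x0 ∈ B) :
    ∀ t : ℝ, 0 ≤ t →
      (∑ᶠ y ∈ B, Matrix.exp ℝ (t • Q.truncation B) x0 y) +
        (∫ s in (0 : ℝ)..t,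
          ∑ᶠ y ∈ B, ∑ᶠ z ∈ Bᶜ, Matrix.exp ℝ (s • Q.truncation B) x0 y * Q y z) = 1 := by
  classical
  intro t ht
  set T := Q.truncation B with hT
  set Fb := (Set.toFinite B).toFinset with hFb
  set Fc := (Set.toFinite Bᶜ).toFinset with hFc
  have hFbmem : ∀ y, y ∈ Fb ↔ y ∈ B := fun y => (Set.toFinite B).mem_toFinset
  have hFcmem : ∀ y, y ∈ Fc ↔ y ∉ B := fun y => by
    simp [hFc, Set.Finite.mem_toFinset]
  have hcoe1 : (↑Fb : Set ι) = B := (Set.toFinite B).coe_toFinset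
  have hcoe2 : (↑Fc : Set ι) = Bᶜ := (Set.toFinite Bᶜ).coe_toFinset
  -- rewrite finsums as finset sums
  have hfin1 : ∀ s : ℝ, (∑ᶠ y ∈ B, Matrix.exp ℝ (s • T) x0 y)
      = ∑ y ∈ Fb, Matrix.exp ℝ (s • T) x0 y := by
    intro s
    rw [← hcoe1, finsum_mem_coe_finset]
  have hfin2 : ∀ s : ℝ,
      (∑ᶠ y ∈ B, ∑ᶠ z ∈ Bᶜ, Matrix.exp ℝ (s • T) x0 y * Q y z)
      = ∑ y ∈ Fb, ∑ z ∈ Fc, Matrix.exp ℝ (s • T) x0 y * Q y z := by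
    intro s
    have inner : ∀ y : ι, (∑ᶠ z ∈ Bᶜ, Matrix.exp ℝ (s • T) x0 y * Q y z)
        = ∑ z ∈ Fc, Matrix.exp ℝ (s • T) x0 y * Q y z := by
      intro y; rw [← hcoe2, finsum_mem_coe_finset]
    calc (∑ᶠ y ∈ B, ∑ᶠ z ∈ Bᶜ, Matrix.exp ℝ (s • T) x0 y * Q y z)
        = ∑ᶠ y ∈ B, ∑ z ∈ Fc, Matrix.exp ℝ (s • T) x0 y * Q y z := by
          exact finsum_mem_congr rfl fun y _ => inner y
      _ = ∑ y ∈ Fb, ∑ z ∈ Fc, Matrix.exp ℝ (s • T) x0 y * Q y z := by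
          rw [← hcoe1, finsum_mem_coe_finset]
  set g : ℝ → ℝ := fun s => ∑ y ∈ Fb, Matrix.exp ℝ (s • T) x0 y with hg
  set φ : ℝ → ℝ := fun s => ∑ y ∈ Fb, ∑ z ∈ Fc, Matrix.exp ℝ (s • T) x0 y * Q y z with hφ
  -- derivative of g
  have hderiv : ∀ s : ℝ, HasDerivAt g (-φ s) s := by
    intro s
    have h1 : HasDerivAt g (∑ y ∈ Fb, (Matrix.exp ℝ (s • T) * T) x0 y) s :=
      HasDerivAt.fun_sum fun y _ => entry_hasDerivAt T x0 y s
    convert h1 using 1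
    set P := Matrix.exp ℝ (s • T) with hP
    have hswap : ∑ y ∈ Fb, (P * T) x0 y
        = ∑ z, P x0 z * ∑ y ∈ Fb, T z y := by
      simp only [Matrix.mul_apply]
      rw [Finset.sum_comm]
      simp [Finset.mul_sum]
    have hsplit : ∀ z : ι, P x0 z * ∑ y ∈ Fb, T z y
        = - (if z ∈ Fb then ∑ w ∈ Fc, P x0 z * Q z w else 0) := by
      intro z
      by_cases hz : z ∈ B
      · have hzb : z ∈ Fb := (hFbmem z).2 hz
        have hTz : ∀ y, T z y = Q z y := by
          intro y; simp [hT, Matrix.truncation, hz]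
        have hrowsplit : ∑ y ∈ Fb, Q z y + ∑ y ∈ Fc, Q z y = 0 := by
          rw [← hrow z, ← Finset.sum_union]
          · apply Finset.sum_congr _ fun _ _ => rfl
            ext w
            simp [hFbmem, hFcmem, em]
          · rw [Finset.disjoint_left]
            intro a ha hac
            exact (hFcmem a).1 hac ((hFbmem a).1 ha)
        have hb : ∑ y ∈ Fb, T z y = - ∑ y ∈ Fc, Q z y := by
          simp only [hTz]; linarith
        rw [hb, if_pos hzb, mul_neg, Finset.mul_sum]
      · have hzb : z ∉ Fb := fun h => hz ((hFbmem z).1 h)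
        have hTz : ∀ y, T z y = 0 := by
          intro y; simp [hT, Matrix.truncation, hz]
        simp [hTz, hzb]
    rw [hswap, Finset.sum_congr rfl fun z _ => hsplit z, Finset.sum_neg_distrib,
      Finset.sum_ite_mem, Finset.univ_inter]
  -- continuity of φ
  have hφcont : Continuous φ := by
    apply continuous_finset_sum
    intro y _
    apply continuous_finset_sum
    intro z _
    exact (continuous_iff_continuousAt.2 fun s =>
      (entry_hasDerivAt T x0 y s).continuousAt).mul continuous_const
  -- FTC
  have hFTC : ∫ s in (0:ℝ)..t, -φ s = g t - g 0 := by
    apply intervalIntegral.integral_eq_sub_of_hasDerivAt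
    · intro s _; exact hderiv s
    · exact (hφcont.neg).intervalIntegrable 0 t
  have hint : (∫ s in (0:ℝ)..t, φ s) = g 0 - g t := by
    rw [intervalIntegral.integral_neg] at hFTC
    linarith
  have hg0 : g 0 = 1 := by
    simp only [hg, zero_smul]
    have hone : Matrix.exp ℝ (0 : Matrix ι ι ℝ) = 1 := by
      simp [Matrix.exp, NormedSpace.exp_zero]
    rw [hone, Finset.sum_eq_single x0]
    · simp [Matrix.one_apply]
    · intro b _ hb
      simp [Matrix.one_apply, (Ne.symm hb)]
    · intro h
      exact absurd ((hFbmem x0).2 hx0) h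
  rw [hfin1]
  have hI : (∫ s in (0 : ℝ)..t,
      ∑ᶠ y ∈ B, ∑ᶠ z ∈ Bᶜ, Matrix.exp ℝ (s • T) x0 y * Q y z)
      = ∫ s in (0:ℝ)..t, φ s := by
    apply intervalIntegral.integral_congr
    intro s _
    exact hfin2 s
  rw [hI, hint, hg0]
  have : (∑ y ∈ Fb, Matrix.exp ℝ (t • T) x0 y) = g t := rfl
  rw [this]; ring
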